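/- arXiv:1709.03889 — 3 statements merged into one kernel-verified Lean document; each statement's English description precedes it below -/
import Mathlib

section
/- Let X → Y → Z → X[1] be an Auslander-Reiten triangle with Z not isomorphic to Z[1], and let W be indecomposable. Then dim Hom(W,X) + dim Hom(W,Z) − dim Hom(W,Y) equals 1 if W ≅ Z or W ≅ Z[−1], and equals 0 otherwise. -/
open CategoryTheory Limits Pretriangulated Module
open scoped Classical
set_option linter.unusedSectionVars false

noncomputable section

variable {k : Type} [Field k] [IsAlgClosed k]
variable {C : Type} [Category C] [Preadditive C] [CategoryTheory.Linear k C]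
  [HasZeroObject C] [HasBinaryBiproducts C] [HasFiniteBiproducts C]
  [HasShift C ℤ] [∀ n : ℤ, (CategoryTheory.shiftFunctor C n).Additive]
  [Pretriangulated C]
  [∀ X Y : C, FiniteDimensional k (X ⟶ Y)]

/-- An object is indecomposable if it is nonzero and admits no nontrivial
direct sum decomposition. -/
def Indec (W : C) : Prop :=
  ¬ IsZero W ∧ ∀ A B : C, Nonempty (W ≅ A ⊞ B) → IsZero A ∨ IsZero B

/-- The Krull-Schmidt property: indecomposables have local endomorphism rings
and every object is a finite direct sum of indecomposables. -/
def KrullSchmidt : Prop :=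
  (∀ W : C, Indec W → ∀ f : W ⟶ W, IsIso f ∨ IsIso (𝟙 W - f)) ∧
  (∀ X : C, ∃ (n : ℕ) (f : Fin n → C), (∀ i, Indec (f i)) ∧ Nonempty (X ≅ ⨁ f))

/-- An Auslander-Reiten triangle: a distinguished triangle with indecomposable
end terms, nonzero connecting map, such that every non-split-epi to the third
object factors through the middle (equivalently every non-split-mono out of the
first object factors through the middle). -/
def IsARTriangle (T : Triangle C) : Prop :=
  (T ∈ distTriang C) ∧ Indec T.obj₁ ∧ Indec T.obj₃ ∧ T.mor₃ ≠ 0 ∧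
  (∀ (W : C) (f : W ⟶ T.obj₃), (¬ ∃ s : T.obj₃ ⟶ W, s ≫ f = 𝟙 T.obj₃) →
    ∃ g : W ⟶ T.obj₂, g ≫ T.mor₂ = f) ∧
  (∀ (W : C) (f : T.obj₁ ⟶ W), (¬ ∃ s : W ⟶ T.obj₁, f ≫ s = 𝟙 T.obj₁) →
    ∃ g : T.obj₂ ⟶ W, T.mor₁ ≫ g = f)

/-- Postcomposition with `δ` as a `k`-linear map between Hom spaces. -/
def pcomp (W : C) {A B : C} (δ : A ⟶ B) : (W ⟶ A) →ₗ[k] (W ⟶ B) where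
  toFun f := f ≫ δ
  map_add' f g := Preadditive.add_comp _ _ _ _ _ _
  map_smul' a f := by simp

lemma splitepi_isIso (hKS : KrullSchmidt (C := C)) {W Z : C} (hW : Indec W) (hZ : ¬ IsZero Z)
    (f : W ⟶ Z) (s : Z ⟶ W) (hs : s ≫ f = 𝟙 Z) : IsIso f := by
  have he : (f ≫ s) ≫ (f ≫ s) = f ≫ s := by
    rw [Category.assoc, ← Category.assoc s f s, hs, Category.id_comp]
  have hidem : (f ≫ s) ≫ (f ≫ s) = (f ≫ s) ≫ 𝟙 W := by
    rw [Category.comp_id, he]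
  rcases hKS.1 W hW (f ≫ s) with h | h
  · have h1 : f ≫ s = 𝟙 W := by
      haveI := h
      exact (cancel_epi (f ≫ s)).mp hidem
    exact ⟨⟨s, h1, hs⟩⟩
  · have hidem2 : (𝟙 W - f ≫ s) ≫ (𝟙 W - f ≫ s) = (𝟙 W - f ≫ s) ≫ 𝟙 W := by
      simp only [Preadditive.sub_comp, Preadditive.comp_sub, Category.comp_id,
        Category.id_comp, he]
      abel
    have h1 : 𝟙 W - f ≫ s = 𝟙 W := by
      haveI := h
      exact (cancel_epi (𝟙 W - f ≫ s)).mp hidem2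
    have h0 : f ≫ s = 0 := sub_eq_self.mp h1
    exfalso
    apply hZ
    rw [IsZero.iff_id_eq_zero]
    calc 𝟙 Z = (s ≫ f) ≫ (s ≫ f) := by rw [hs, Category.comp_id]
    _ = s ≫ (f ≫ s) ≫ f := by simp [Category.assoc]
    _ = 0 := by rw [h0, zero_comp, comp_zero]

lemma exists_eigen {Z : C} (hZ : ¬ IsZero Z) (u : Z ⟶ Z) :
    ∃ a : k, ¬ IsIso (u - a • 𝟙 Z) := by
  have hnt : Nontrivial (End Z) := by
    refine nontrivial_of_ne (𝟙 Z) 0 fun h => hZ ((IsZero.iff_id_eq_zero Z).mpr h)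
  have hfd : FiniteDimensional k (End Z) := inferInstanceAs (FiniteDimensional k (Z ⟶ Z))
  obtain ⟨c, nu⟩ := spectrum.nonempty_of_isAlgClosed_of_finiteDimensional k (End.of u)
  refine ⟨c, ?_⟩
  rw [spectrum.mem_iff, IsUnit.sub_iff, isUnit_iff_isIso, Algebra.algebraMap_eq_smul_one] at nu
  exact nu

lemma rank_pcomp (hKS : KrullSchmidt (C := C)) {A B : C} (δ : A ⟶ B) (hδ : δ ≠ 0)
    (hfac : ∀ (V : C) (u : V ⟶ A), (¬ ∃ s : A ⟶ V, s ≫ u = 𝟙 A) → u ≫ δ = 0)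
    (hA : Indec A) (W : C) (hW : Indec W) :
    finrank k (LinearMap.range (pcomp (k := k) W δ)) = if Nonempty (W ≅ A) then 1 else 0 := by
  by_cases hiso : Nonempty (W ≅ A)
  · obtain ⟨φ⟩ := hiso
    rw [if_pos ⟨φ⟩]
    have hx0 : φ.hom ≫ δ ≠ 0 := by
      intro h
      apply hδ
      rw [← Category.id_comp δ, ← φ.inv_hom_id, Category.assoc, h, comp_zero]
    have key : ∀ f : W ⟶ A, ∃ a : k, f ≫ δ = a • (φ.hom ≫ δ) := by
      intro f
      obtain ⟨a, ha⟩ := exists_eigen (k := k) hA.1 (φ.inv ≫ f)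
      refine ⟨a, ?_⟩
      have hv : (φ.inv ≫ f - a • 𝟙 A) ≫ δ = 0 := by
        apply hfac
        rintro ⟨s, hs⟩
        exact ha (splitepi_isIso hKS hA hA.1 _ s hs)
      have h2 : φ.inv ≫ f ≫ δ = a • δ := by
        rw [Preadditive.sub_comp, sub_eq_zero] at hv
        rw [← Category.assoc]
        rw [hv]
        simp
      calc f ≫ δ = φ.hom ≫ (φ.inv ≫ f ≫ δ) := by
            rw [← Category.assoc, ← Category.assoc, φ.hom_inv_id, Category.id_comp]
      _ = φ.hom ≫ (a • δ) := by rw [h2]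
      _ = a • (φ.hom ≫ δ) := by rw [Linear.comp_smul]
    have hrange : LinearMap.range (pcomp (k := k) W δ) = Submodule.span k {φ.hom ≫ δ} := by
      apply le_antisymm
      · rintro x ⟨f, rfl⟩
        obtain ⟨a, ha⟩ := key f
        rw [show pcomp (k := k) W δ f = f ≫ δ from rfl, ha]
        exact Submodule.smul_mem _ _ (Submodule.mem_span_singleton_self _)
      · rw [Submodule.span_le, Set.singleton_subset_iff]
        exact ⟨φ.hom, rfl⟩
    rw [hrange, finrank_span_singleton hx0]
  · rw [if_neg hiso]
    have hz : ∀ f : W ⟶ A, f ≫ δ = 0 := by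
      intro f
      apply hfac
      rintro ⟨s, hs⟩
      haveI := splitepi_isIso hKS hW hA.1 f s hs
      exact hiso ⟨asIso f⟩
    have hb : LinearMap.range (pcomp (k := k) W δ) = ⊥ := by
      rw [LinearMap.range_eq_bot]
      ext f
      exact hz f
    rw [hb, finrank_bot]

lemma indec_shift_neg_one {Z : C} (hZ : Indec Z) : Indec (Z⟦(-1 : ℤ)⟧) := by
  have E := shiftEquiv C (1 : ℤ)
  constructor
  · intro h
    apply hZ.1
    rw [IsZero.iff_id_eq_zero] at h ⊢
    apply (shiftFunctor C (-1 : ℤ)).map_injective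
    simp [h]
  · intro A B ⟨ψ⟩
    haveI : PreservesBinaryBiproducts (shiftFunctor C (1 : ℤ)) :=
      Limits.preservesBinaryBiproducts_of_preservesBiproducts _
    have i : Z ≅ A⟦(1 : ℤ)⟧ ⊞ B⟦(1 : ℤ)⟧ :=
      ((shiftEquiv C (1 : ℤ)).counitIso.app Z).symm ≪≫
        (shiftFunctor C (1 : ℤ)).mapIso ψ ≪≫ (shiftFunctor C (1 : ℤ)).mapBiprod A B
    rcases hZ.2 _ _ ⟨i⟩ with h | h
    · left
      rw [IsZero.iff_id_eq_zero] at h ⊢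
      apply (shiftFunctor C (1 : ℤ)).map_injective
      simp [h]
    · right
      rw [IsZero.iff_id_eq_zero] at h ⊢
      apply (shiftFunctor C (1 : ℤ)).map_injective
      simp [h]

lemma invRotate_mor₁_ne_zero {T : Triangle C} (h3 : T.mor₃ ≠ 0) :
    T.invRotate.mor₁ ≠ 0 := by
  intro h
  apply h3
  have h1 : T.mor₃⟦(-1 : ℤ)⟧' = 0 := by
    have h2 : -(T.mor₃⟦(-1 : ℤ)⟧' ≫ (shiftEquiv C (1 : ℤ)).unitIso.inv.app T.obj₁) = 0 := h
    rw [neg_eq_zero] at h2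
    exact (cancel_mono ((shiftEquiv C (1 : ℤ)).unitIso.inv.app T.obj₁)).mp (h2.trans zero_comp.symm)
  apply (shiftFunctor C (-1 : ℤ)).map_injective
  simp [h1]

lemma invRotate_fac {T : Triangle C} (hT : IsARTriangle T) {V : C}
    (u : V ⟶ T.obj₃⟦(-1 : ℤ)⟧)
    (hu : ¬ ∃ s : T.obj₃⟦(-1 : ℤ)⟧ ⟶ V, s ≫ u = 𝟙 (T.obj₃⟦(-1 : ℤ)⟧)) :
    u ≫ T.invRotate.mor₁ = 0 := by
  set E := shiftEquiv C (1 : ℤ) with hE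
  set g : V⟦(1 : ℤ)⟧ ⟶ T.obj₃ := E.functor.map u ≫ E.counitIso.hom.app T.obj₃ with hg
  have hgns : ¬ ∃ s : T.obj₃ ⟶ V⟦(1 : ℤ)⟧, s ≫ g = 𝟙 T.obj₃ := by
    rintro ⟨s, hs⟩
    apply hu
    have hs' : s ≫ E.functor.map u = (E.counitIso.app T.obj₃).inv := by
      have h1 := hs
      rw [hg] at h1
      exact (Iso.comp_hom_eq_id (E.counitIso.app T.obj₃)).mp ((Category.assoc _ _ _).trans h1)
    set t : T.obj₃⟦(-1 : ℤ)⟧ ⟶ V := E.inverse.map s ≫ E.unitIso.inv.app V with ht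
    have hnat : E.inverse.map (E.functor.map u) ≫ E.unitIso.inv.app (E.inverse.obj T.obj₃)
        = E.unitIso.inv.app V ≫ u := E.unitIso.inv.naturality u
    have htu : t ≫ u
        = E.inverse.map ((E.counitIso.app T.obj₃).inv) ≫ E.unitIso.inv.app (E.inverse.obj T.obj₃) := by
      erw [ht, Category.assoc, ← hnat, ← Category.assoc, ← Functor.map_comp, hs']
      rfl
    haveI : IsIso (t ≫ u) := by rw [htu]; exact IsIso.comp_isIso' (Iso.isIso_hom (E.inverse.mapIso (E.counitIso.app T.obj₃).symm)) (Iso.isIso_inv (E.unitIso.app (E.inverse.obj T.obj₃)))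
    exact ⟨inv (t ≫ u) ≫ t, by rw [Category.assoc, IsIso.inv_hom_id]⟩
  obtain ⟨g', hg'⟩ := hT.2.2.2.2.1 _ g hgns
  have hg3 : g ≫ T.mor₃ = 0 := by
    rw [← hg', Category.assoc, comp_distTriang_mor_zero₂₃ _ hT.1, comp_zero]
  have hmain : u ≫ T.mor₃⟦(-1 : ℤ)⟧' = 0 := by
    apply E.functor.map_injective
    rw [Functor.map_comp, Functor.map_zero]
    have hnat2 : E.functor.map (E.inverse.map T.mor₃) ≫ E.counitIso.hom.app (T.obj₁⟦(1 : ℤ)⟧)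
        = E.counitIso.hom.app T.obj₃ ≫ T.mor₃ := E.counitIso.hom.naturality T.mor₃
    have hzero : (E.functor.map u ≫ E.functor.map (T.mor₃⟦(-1 : ℤ)⟧'))
        ≫ E.counitIso.hom.app (T.obj₁⟦(1 : ℤ)⟧) = 0 := by
      erw [Category.assoc]
      rw [show E.functor.map (T.mor₃⟦(-1 : ℤ)⟧') = E.functor.map (E.inverse.map T.mor₃) from rfl]
      erw [hnat2, ← Category.assoc, ← hg, hg3]
      rfl
    exact (cancel_mono (E.counitIso.hom.app (T.obj₁⟦(1 : ℤ)⟧))).mp (hzero.trans zero_comp.symm)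
  have heq : T.invRotate.mor₁ = -(T.mor₃⟦(-1 : ℤ)⟧' ≫ E.unitIso.inv.app T.obj₁) := rfl
  erw [heq, Preadditive.comp_neg, ← Category.assoc, hmain, zero_comp, neg_zero]

theorem stmt3 (hKS : KrullSchmidt (C := C))
    (T : Triangle C) (hT : IsARTriangle T)
    (hZ : ¬ Nonempty (T.obj₃ ≅ T.obj₃⟦(1 : ℤ)⟧))
    (W : C) (hW : Indec W) :
    (finrank k (W ⟶ T.obj₁) : ℤ) + finrank k (W ⟶ T.obj₃) - finrank k (W ⟶ T.obj₂) =
      if Nonempty (W ≅ T.obj₃) ∨ Nonempty (W ≅ T.obj₃⟦(-1 : ℤ)⟧) then 1 else 0 := by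
  have hT' : T.invRotate ∈ distTriang C := inv_rot_of_distTriang T hT.1
  have hba : LinearMap.ker (pcomp (k := k) W T.mor₁)
      = LinearMap.range (pcomp (k := k) W T.invRotate.mor₁) := by
    ext f
    simp only [LinearMap.mem_ker, LinearMap.mem_range]
    constructor
    · intro hf
      obtain ⟨g, hgf⟩ := Triangle.coyoneda_exact₂ _ hT' f hf
      exact ⟨g, hgf.symm⟩
    · rintro ⟨g, rfl⟩
      show (g ≫ T.invRotate.mor₁) ≫ T.mor₁ = 0
      have h0 : T.invRotate.mor₁ ≫ T.invRotate.mor₂ = 0 := comp_distTriang_mor_zero₁₂ _ hT'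
      erw [Category.assoc]
      rw [show T.invRotate.mor₁ ≫ T.mor₁ = 0 from h0, comp_zero]
  have hcb : LinearMap.ker (pcomp (k := k) W T.mor₂)
      = LinearMap.range (pcomp (k := k) W T.mor₁) := by
    ext f
    simp only [LinearMap.mem_ker, LinearMap.mem_range]
    constructor
    · intro hf
      obtain ⟨g, hgf⟩ := Triangle.coyoneda_exact₂ _ hT.1 f hf
      exact ⟨g, hgf.symm⟩
    · rintro ⟨g, rfl⟩
      show (g ≫ T.mor₁) ≫ T.mor₂ = 0
      rw [Category.assoc, comp_distTriang_mor_zero₁₂ _ hT.1, comp_zero]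
  have hdc : LinearMap.ker (pcomp (k := k) W T.mor₃)
      = LinearMap.range (pcomp (k := k) W T.mor₂) := by
    ext f
    simp only [LinearMap.mem_ker, LinearMap.mem_range]
    constructor
    · intro hf
      obtain ⟨g, hgf⟩ := Triangle.coyoneda_exact₃ _ hT.1 f hf
      exact ⟨g, hgf.symm⟩
    · rintro ⟨g, rfl⟩
      show (g ≫ T.mor₂) ≫ T.mor₃ = 0
      rw [Category.assoc, comp_distTriang_mor_zero₂₃ _ hT.1, comp_zero]
  have e1 : finrank k (W ⟶ T.obj₁)
      = finrank k (LinearMap.range (pcomp (k := k) W T.mor₁))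
        + finrank k (LinearMap.range (pcomp (k := k) W T.invRotate.mor₁)) := by
    rw [← LinearMap.finrank_range_add_finrank_ker (pcomp (k := k) W T.mor₁), hba]
    rfl
  have e2 : finrank k (W ⟶ T.obj₂)
      = finrank k (LinearMap.range (pcomp (k := k) W T.mor₂))
        + finrank k (LinearMap.range (pcomp (k := k) W T.mor₁)) := by
    rw [← LinearMap.finrank_range_add_finrank_ker (pcomp (k := k) W T.mor₂), hcb]
  have e3 : finrank k (W ⟶ T.obj₃)
      = finrank k (LinearMap.range (pcomp (k := k) W T.mor₃))
        + finrank k (LinearMap.range (pcomp (k := k) W T.mor₂)) := by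
    rw [← LinearMap.finrank_range_add_finrank_ker (pcomp (k := k) W T.mor₃), hdc]
  have hrd : finrank k (LinearMap.range (pcomp (k := k) W T.mor₃))
      = if Nonempty (W ≅ T.obj₃) then 1 else 0 := by
    refine rank_pcomp hKS T.mor₃ hT.2.2.2.1 ?_ hT.2.2.1 W hW
    intro V u hu
    obtain ⟨g, hg⟩ := hT.2.2.2.2.1 V u hu
    rw [← hg, Category.assoc, comp_distTriang_mor_zero₂₃ _ hT.1, comp_zero]
  have hra : finrank k (LinearMap.range (pcomp (k := k) W T.invRotate.mor₁))
      = if Nonempty (W ≅ T.obj₃⟦(-1 : ℤ)⟧) then 1 else 0 := by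
    refine rank_pcomp hKS T.invRotate.mor₁ (invRotate_mor₁_ne_zero hT.2.2.2.1) ?_
      (indec_shift_neg_one hT.2.2.1) W hW
    intro V u hu
    exact invRotate_fac hT u hu
  have hnot : ¬ (Nonempty (W ≅ T.obj₃) ∧ Nonempty (W ≅ T.obj₃⟦(-1 : ℤ)⟧)) := by
    rintro ⟨⟨φ⟩, ⟨ψ⟩⟩
    apply hZ
    have i : T.obj₃⟦(-1 : ℤ)⟧⟦(1 : ℤ)⟧ ≅ T.obj₃ := (shiftEquiv C (1 : ℤ)).counitIso.app T.obj₃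
    exact ⟨((shiftFunctor C (1 : ℤ)).mapIso (φ.symm ≪≫ ψ) ≪≫ i).symm⟩
  by_cases hP : Nonempty (W ≅ T.obj₃)
  · have hQ : ¬ Nonempty (W ≅ T.obj₃⟦(-1 : ℤ)⟧) := fun h => hnot ⟨hP, h⟩
    rw [e1, e2, e3, hrd, hra, if_pos hP, if_neg hQ, if_pos (Or.inl hP)]
    push_cast
    ring
  · by_cases hQ : Nonempty (W ≅ T.obj₃⟦(-1 : ℤ)⟧)
    · rw [e1, e2, e3, hrd, hra, if_neg hP, if_pos hQ, if_pos (Or.inr hQ)]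
      push_cast
      ring
    · rw [e1, e2, e3, hrd, hra, if_neg hP, if_neg hQ,
        if_neg (by rintro (h | h) <;> [exact hP h; exact hQ h])]
      push_cast
      ring
end
end

section
/- Let X → Y → Z → X[1] be an Auslander-Reiten triangle with Z ≅ Z[1], and let W be indecomposable. Then dim Hom(W,X) + dim Hom(W,Z) − dim Hom(W,Y) equals 2 if W ≅ Z and 0 otherwise. -/
set_option linter.unusedSectionVars false


open CategoryTheory Limits Pretriangulated Module
open scoped Classical

noncomputable section

variable {k : Type} [Field k] [IsAlgClosed k]
variable {C : Type} [Category C] [Preadditive C] [CategoryTheory.Linear k C]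
  [HasZeroObject C] [HasBinaryBiproducts C] [HasFiniteBiproducts C]
  [HasShift C ℤ] [∀ n : ℤ, (CategoryTheory.shiftFunctor C n).Additive]
  [Pretriangulated C]
  [∀ X Y : C, FiniteDimensional k (X ⟶ Y)]

include k in
lemma aux_isIso_of_section {A : C} (f s : A ⟶ A) (h : s ≫ f = 𝟙 A) : IsIso f := by
  have hsurj : Function.Surjective (Linear.rightComp k A f) := fun u =>
    ⟨u ≫ s, by simp [Category.assoc, h]⟩
  have hinj := LinearMap.injective_iff_surjective.2 hsurj
  have h2 : f ≫ s = 𝟙 A := by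
    apply hinj
    simp [reassoc_of% h, h]
  exact ⟨s, h2, h⟩

lemma aux_comp_iso_zero {A B B' : C} (u : B ⟶ B') [IsIso u] (w : A ⟶ B) :
    w ≫ u = 0 ↔ w = 0 := by
  constructor
  · intro h
    rw [← Category.comp_id w, ← IsIso.hom_inv_id u, ← Category.assoc, h, zero_comp]
  · intro h; rw [h, zero_comp]

lemma aux_map_zero_iff {A B : C} (w : A ⟶ B) :
    (shiftFunctor C (1:ℤ)).map w = 0 ↔ w = 0 := by
  constructor
  · intro h
    apply (shiftFunctor C (1:ℤ)).map_injective
    rw [h, Functor.map_zero]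
  · intro h; rw [h, Functor.map_zero]

lemma aux_indec_iso {A B : C} (h : Indec A) (e : A ≅ B) : Indec B :=
  ⟨fun hz => h.1 (hz.of_iso e), fun A' B' ⟨i⟩ => h.2 A' B' ⟨e ≪≫ i⟩⟩

lemma aux_not_splitEpi (hKS1 : ∀ W : C, Indec W → ∀ f : W ⟶ W, IsIso f ∨ IsIso (𝟙 W - f))
    {W Z' : C} (hW : Indec W) (hZ' : ¬ IsZero Z') (hne : ¬ Nonempty (W ≅ Z'))
    (f : W ⟶ Z') : ¬ ∃ s : Z' ⟶ W, s ≫ f = 𝟙 Z' := by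
  rintro ⟨s, hs⟩
  rcases hKS1 W hW (f ≫ s) with h | h
  · have he : f ≫ s = 𝟙 W := by
      have h1 : (f ≫ s) ≫ (f ≫ s) = (f ≫ s) ≫ 𝟙 W := by
        simp [reassoc_of% hs]
      exact (cancel_epi (f ≫ s)).1 h1
    exact hne ⟨⟨f, s, he, hs⟩⟩
  · have h0 : (f ≫ s) ≫ (𝟙 W - f ≫ s) = 0 := by
      simp [Preadditive.comp_sub, reassoc_of% hs]
    have he0 : f ≫ s = 0 := by
      rw [← Category.comp_id (f ≫ s), ← IsIso.hom_inv_id (𝟙 W - f ≫ s), ← Category.assoc,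
        h0, zero_comp]
    have hs0 : s = 0 := by
      have h2 := congrArg (fun t => s ≫ t) he0
      simpa [reassoc_of% hs] using h2
    exact hZ' ((IsZero.iff_id_eq_zero Z').2 (by rw [← hs, hs0, zero_comp]))

include k in
lemma aux_exists_nonIso {A : C} (hA : ¬ IsZero A) (f : A ⟶ A) :
    ∃ c : k, ¬ IsIso (f - c • 𝟙 A) := by
  haveI hnt : Nontrivial (A ⟶ A) :=
    ⟨⟨𝟙 A, 0, fun h => hA ((IsZero.iff_id_eq_zero A).2 h)⟩⟩
  obtain ⟨c, hc⟩ := Module.End.exists_eigenvalue (Linear.rightComp k A f)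
  obtain ⟨x, hx⟩ := hc.exists_hasEigenvector
  refine ⟨c, fun hiso => hx.2 ?_⟩
  haveI := hiso
  have heig : x ≫ f = c • x := hx.apply_eq_smul
  have h0 : x ≫ (f - c • 𝟙 A) = 0 := by
    simp [Preadditive.comp_sub, heig, Linear.comp_smul]
  rw [← Category.comp_id x, ← IsIso.hom_inv_id (f - c • 𝟙 A), ← Category.assoc, h0, zero_comp]

include k in
lemma aux_nonIso_submodule {A : C} (hA : ¬ IsZero A)
    (hloc : ∀ f : A ⟶ A, IsIso f ∨ IsIso (𝟙 A - f)) :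
    ∃ M : Submodule k (A ⟶ A), (∀ f : A ⟶ A, f ∈ M ↔ ¬ IsIso f) ∧
      finrank k M + 1 = finrank k (A ⟶ A) := by
  have hzero : ¬ IsIso (0 : A ⟶ A) := fun h =>
    hA ((IsZero.iff_id_eq_zero A).2
      (by rw [← IsIso.hom_inv_id (0 : A ⟶ A), zero_comp]))
  have hsi : ∀ (c : k), c ≠ 0 → ∀ (u : A ⟶ A), IsIso u → IsIso (c • u) := by
    intro c hc u hu
    haveI := hu
    refine ⟨c⁻¹ • inv u, ?_, ?_⟩
    · rw [Linear.smul_comp, Linear.comp_smul, smul_smul, mul_inv_cancel₀ hc,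
        IsIso.hom_inv_id, one_smul]
    · rw [Linear.smul_comp, Linear.comp_smul, smul_smul, inv_mul_cancel₀ hc,
        IsIso.inv_hom_id, one_smul]
  have hunit : ∀ c : k, c ≠ 0 → IsIso (c • 𝟙 A) := fun c hc =>
    hsi c hc (𝟙 A) inferInstance
  have hadd : ∀ {f g : A ⟶ A}, ¬ IsIso f → ¬ IsIso g → ¬ IsIso (f + g) := by
    intro f g hf hg hfg
    haveI := hfg
    rcases hloc (f ≫ inv (f + g)) with h | h
    · apply hf
      have h1 : (f ≫ inv (f + g)) ≫ (f + g) = f := by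
        rw [Category.assoc, IsIso.inv_hom_id, Category.comp_id]
      rw [← h1]
      haveI := h
      infer_instance
    · apply hg
      have heq : 𝟙 A - f ≫ inv (f + g) = g ≫ inv (f + g) := by
        rw [← IsIso.hom_inv_id (f + g), Preadditive.add_comp]
        abel
      rw [heq] at h
      have h1 : (g ≫ inv (f + g)) ≫ (f + g) = g := by
        rw [Category.assoc, IsIso.inv_hom_id, Category.comp_id]
      rw [← h1]
      haveI := h
      infer_instance
  have hsmul : ∀ (c : k) {f : A ⟶ A}, ¬ IsIso f → ¬ IsIso (c • f) := by
    intro c f hf hcf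
    by_cases hc : c = 0
    · subst hc
      rw [zero_smul] at hcf
      exact hzero hcf
    · apply hf
      have h1 : f = c⁻¹ • (c • f) := by rw [smul_smul, inv_mul_cancel₀ hc, one_smul]
      rw [h1]
      exact hsi c⁻¹ (inv_ne_zero hc) _ hcf
  let M : Submodule k (A ⟶ A) :=
    { carrier := {f | ¬ IsIso f}
      add_mem' := fun hf hg => hadd hf hg
      zero_mem' := hzero
      smul_mem' := fun c f hf => hsmul c hf }
  refine ⟨M, fun f => Iff.rfl, ?_⟩
  let φ : k →ₗ[k] ((A ⟶ A) ⧸ M) :=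
    LinearMap.toSpanSingleton k _ (Submodule.Quotient.mk (𝟙 A))
  have hφ : ∀ c : k, φ c = Submodule.Quotient.mk (c • 𝟙 A) := by
    intro c
    rw [LinearMap.toSpanSingleton_apply, ← Submodule.Quotient.mk_smul]
  have hker : ∀ c : k, φ c = 0 → c = 0 := by
    intro c hc
    by_contra hc0
    have hm : (c • 𝟙 A) ∈ M := by
      rwa [hφ, Submodule.Quotient.mk_eq_zero] at hc
    exact hm (hunit c hc0)
  have hinj : Function.Injective φ := by
    intro a b h
    have := hker (a - b) (by rw [map_sub, h, sub_self])
    exact sub_eq_zero.1 this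
  have hsurj : Function.Surjective φ := by
    intro q
    obtain ⟨f, rfl⟩ := Submodule.Quotient.mk_surjective M q
    obtain ⟨c, hc⟩ := aux_exists_nonIso (k := k) hA f
    refine ⟨c, ?_⟩
    rw [hφ, Submodule.Quotient.eq]
    have hm : f - c • 𝟙 A ∈ M := hc
    have := M.neg_mem hm
    rwa [neg_sub] at this
  have h1 : finrank k ((A ⟶ A) ⧸ M) = 1 := by
    rw [← (LinearEquiv.ofBijective φ ⟨hinj, hsurj⟩).finrank_eq, finrank_self]
  have h2 := Submodule.finrank_quotient_add_finrank M
  omega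

include k in
lemma aux_splitepi_dim (hKS1 : ∀ W : C, Indec W → ∀ f : W ⟶ W, IsIso f ∨ IsIso (𝟙 W - f))
    {W Z' : C} (hW : Indec W) (hZ' : Indec Z')
    (S : Submodule k (W ⟶ Z'))
    (hS : ∀ f : W ⟶ Z', f ∈ S ↔ ¬ ∃ s : Z' ⟶ W, s ≫ f = 𝟙 Z') :
    (finrank k S : ℤ) = finrank k (W ⟶ Z') - (if Nonempty (W ≅ Z') then 1 else 0) := by
  by_cases hiso : Nonempty (W ≅ Z')
  · rw [if_pos hiso]
    obtain ⟨φ⟩ := hiso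
    obtain ⟨M, hM, hMrank⟩ := aux_nonIso_submodule (k := k) hZ'.1 (hKS1 Z' hZ')
    let e : (W ⟶ Z') ≃ₗ[k] (Z' ⟶ Z') :=
      LinearEquiv.ofLinear (Linear.leftComp k Z' φ.inv) (Linear.leftComp k Z' φ.hom)
        (by ext f; simp) (by ext f; simp)
    have hmap : S.map (e : (W ⟶ Z') →ₗ[k] (Z' ⟶ Z')) = M := by
      ext u
      simp only [Submodule.mem_map]
      constructor
      · rintro ⟨f, hf, rfl⟩
        rw [hM]
        intro hu
        apply (hS f).1 hf
        have hu' : IsIso (φ.inv ≫ f) := by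
          simpa [e, Linear.leftComp_apply] using hu
        haveI := hu'
        refine ⟨inv (φ.inv ≫ f) ≫ φ.inv, ?_⟩
        rw [Category.assoc, IsIso.inv_comp_eq]
        simp
      · intro hu
        refine ⟨φ.hom ≫ u, ?_, by simp [e, Linear.leftComp_apply]⟩
        rw [hS]
        rintro ⟨s, hs⟩
        rw [← Category.assoc] at hs
        exact (hM u).1 hu (aux_isIso_of_section (k := k) u (s ≫ φ.hom) hs)
    have hr1 : finrank k S = finrank k M := by
      rw [← hmap, LinearEquiv.finrank_map_eq]
    have hr2 : finrank k (W ⟶ Z') = finrank k (Z' ⟶ Z') := e.finrank_eq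
    rw [hr1, hr2]
    omega
  · rw [if_neg hiso]
    have hS2 : S = ⊤ := by
      rw [Submodule.eq_top_iff']
      intro f
      rw [hS]
      exact aux_not_splitEpi hKS1 hW hZ'.1 hiso f
    rw [hS2]
    simp [finrank_top]

theorem stmt4 (hKS : KrullSchmidt (C := C))
    (T : Triangle C) (hT : IsARTriangle T)
    (hZ : Nonempty (T.obj₃ ≅ T.obj₃⟦(1 : ℤ)⟧))
    (W : C) (hW : Indec W) :
    (finrank k (W ⟶ T.obj₁) : ℤ) + finrank k (W ⟶ T.obj₃) - finrank k (W ⟶ T.obj₂) =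
      if Nonempty (W ≅ T.obj₃) then 2 else 0 := by
  obtain ⟨hKS1, -⟩ := hKS
  obtain ⟨hdt, hX1, hZ3, hc, hfac, -⟩ := hT
  have hT' := inv_rot_of_distTriang T hdt
  have hzero12 : T.mor₁ ≫ T.mor₂ = 0 := comp_distTriang_mor_zero₁₂ T hdt
  have hzero23 : T.mor₂ ≫ T.mor₃ = 0 := comp_distTriang_mor_zero₂₃ T hdt
  have hzero01 : T.invRotate.mor₁ ≫ T.mor₁ = 0 := comp_distTriang_mor_zero₁₂ _ hT'
  -- the four linear maps
  have hker_ran₁ : LinearMap.ker (Linear.rightComp k W T.mor₂) =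
      LinearMap.range (Linear.rightComp k W T.mor₁) := by
    ext f
    simp only [LinearMap.mem_ker, LinearMap.mem_range, Linear.rightComp_apply]
    constructor
    · intro hf
      obtain ⟨g, hg⟩ := Triangle.coyoneda_exact₂ T hdt f hf
      exact ⟨g, hg.symm⟩
    · rintro ⟨g, rfl⟩
      rw [Category.assoc, hzero12, comp_zero]
  have hker_ran₂ : LinearMap.ker (Linear.rightComp k W T.mor₃) =
      LinearMap.range (Linear.rightComp k W T.mor₂) := by
    ext f
    simp only [LinearMap.mem_ker, LinearMap.mem_range, Linear.rightComp_apply]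
    constructor
    · intro hf
      obtain ⟨g, hg⟩ := Triangle.coyoneda_exact₃ T hdt f hf
      exact ⟨g, hg.symm⟩
    · rintro ⟨g, rfl⟩
      rw [Category.assoc, hzero23, comp_zero]
  have hker_ran₀ : LinearMap.ker (Linear.rightComp k W T.mor₁) =
      LinearMap.range (Linear.rightComp k W T.invRotate.mor₁) := by
    ext f
    simp only [LinearMap.mem_ker, LinearMap.mem_range, Linear.rightComp_apply]
    constructor
    · intro hf
      obtain ⟨g, hg⟩ := Triangle.coyoneda_exact₂ T.invRotate hT' f hf
      exact ⟨g, hg.symm⟩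
    · rintro ⟨g, rfl⟩
      show (g ≫ T.invRotate.mor₁) ≫ T.mor₁ = 0
      erw [Category.assoc, hzero01, comp_zero]
  -- split epi characterization of the kernel of γ
  have hker3 : ∀ (V : C) (f : V ⟶ T.obj₃),
      f ≫ T.mor₃ = 0 ↔ ¬ ∃ s : T.obj₃ ⟶ V, s ≫ f = 𝟙 T.obj₃ := by
    intro V f
    constructor
    · rintro h ⟨s, hs⟩
      apply hc
      rw [← Category.id_comp T.mor₃, ← hs, Category.assoc, h, comp_zero]
    · intro h
      obtain ⟨g, hg⟩ := hfac V f h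
      rw [← hg, Category.assoc, hzero23, comp_zero]
  -- split epi characterization of the kernel of δ
  have hker0 : ∀ g : W ⟶ (T.obj₃⟦(-1:ℤ)⟧),
      g ≫ T.invRotate.mor₁ = 0 ↔
        ¬ ∃ s : (T.obj₃⟦(-1:ℤ)⟧) ⟶ W, s ≫ g = 𝟙 (T.obj₃⟦(-1:ℤ)⟧) := by
    intro g
    set ε := (shiftEquiv C (1:ℤ)).counitIso with hε
    set gh : (W⟦(1:ℤ)⟧) ⟶ T.obj₃ :=
      (shiftFunctor C (1:ℤ)).map g ≫ ε.hom.app T.obj₃ with hgh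
    have key : gh ≫ T.mor₃ =
        (shiftFunctor C (1:ℤ)).map (g ≫ T.mor₃⟦(-1:ℤ)⟧') ≫ ε.hom.app (T.obj₁⟦(1:ℤ)⟧) := by
      have hnat := ε.hom.naturality T.mor₃
      have hnat' : ε.hom.app T.obj₃ ≫ T.mor₃ =
          (shiftFunctor C (1:ℤ)).map ((shiftFunctor C (-1:ℤ)).map T.mor₃) ≫
            ε.hom.app (T.obj₁⟦(1:ℤ)⟧) := by
        exact hnat.symm
      erw [hgh, Category.assoc, hnat', CategoryTheory.Functor.map_comp, Category.assoc]
    have h1 : (g ≫ T.invRotate.mor₁ = 0) ↔ g ≫ T.mor₃⟦(-1:ℤ)⟧' = 0 := by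
      rw [Triangle.invRotate_mor₁]
      erw [Preadditive.comp_neg, neg_eq_zero, ← Category.assoc]
      exact aux_comp_iso_zero (u := ((shiftFunctorCompIsoId C (1:ℤ) (-1) (by omega)).app T.obj₁).hom) _
    have h2 : (∃ s : (T.obj₃⟦(-1:ℤ)⟧) ⟶ W, s ≫ g = 𝟙 (T.obj₃⟦(-1:ℤ)⟧)) ↔
        (∃ t : T.obj₃ ⟶ (W⟦(1:ℤ)⟧), t ≫ gh = 𝟙 T.obj₃) := by
      constructor
      · rintro ⟨s, hs⟩
        refine ⟨ε.inv.app T.obj₃ ≫ (shiftFunctor C (1:ℤ)).map s, ?_⟩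
        erw [hgh, Category.assoc, ← Functor.map_comp_assoc, hs]
        erw [CategoryTheory.Functor.map_id, Category.id_comp]
        exact ε.inv_hom_id_app T.obj₃
      · rintro ⟨t, ht⟩
        refine ⟨(shiftFunctor C (1:ℤ)).preimage (ε.hom.app T.obj₃ ≫ t), ?_⟩
        apply (shiftFunctor C (1:ℤ)).map_injective
        rw [CategoryTheory.Functor.map_comp, Functor.map_preimage]
        have htg : t ≫ (shiftFunctor C (1:ℤ)).map g = ε.inv.app T.obj₃ := by
          apply (cancel_mono (ε.hom.app T.obj₃)).1
          exact (Category.assoc _ _ _).trans (ht.trans (ε.inv_hom_id_app T.obj₃).symm)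
        erw [Category.assoc, htg, Iso.hom_inv_id_app]
        simp
        rfl
    erw [h1, not_congr h2, ← hker3 _ gh, key,
      aux_comp_iso_zero (ε.hom.app (T.obj₁⟦(1:ℤ)⟧))
        ((shiftFunctor C (1:ℤ)).map (g ≫ T.mor₃⟦(-1:ℤ)⟧')),
      aux_map_zero_iff]
    rfl
  -- an isomorphism Z⟦-1⟧ ≅ Z
  obtain ⟨e⟩ := hZ
  let ζ : (T.obj₃⟦(-1:ℤ)⟧) ≅ T.obj₃ :=
    (shiftFunctor C (-1:ℤ)).mapIso e ≪≫ ((shiftEquiv C (1:ℤ)).unitIso.app T.obj₃).symm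
  have hZ3' : Indec (T.obj₃⟦(-1:ℤ)⟧) := aux_indec_iso hZ3 ζ.symm
  have hiff : Nonempty (W ≅ (T.obj₃⟦(-1:ℤ)⟧)) ↔ Nonempty (W ≅ T.obj₃) :=
    ⟨fun ⟨i⟩ => ⟨i ≪≫ ζ⟩, fun ⟨i⟩ => ⟨i ≪≫ ζ.symm⟩⟩
  -- dimensions
  have e1 :=
    aux_splitepi_dim hKS1 hW hZ3 (LinearMap.ker (Linear.rightComp k W T.mor₃))
      (fun f => by rw [LinearMap.mem_ker, Linear.rightComp_apply]; exact hker3 W f)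
  have e2 :=
    aux_splitepi_dim hKS1 hW hZ3'
      (LinearMap.ker (Linear.rightComp k W T.invRotate.mor₁))
      (fun g => LinearMap.mem_ker.trans (hker0 g))
  rw [hiff] at e2
  have r0 := LinearMap.finrank_range_add_finrank_ker (Linear.rightComp k W T.invRotate.mor₁)
  have r1 := LinearMap.finrank_range_add_finrank_ker (Linear.rightComp k W T.mor₁)
  have r2 := LinearMap.finrank_range_add_finrank_ker (Linear.rightComp k W T.mor₂)
  rw [hker_ran₀] at r1
  rw [hker_ran₁] at r2
  rw [hker_ran₂] at e1
  have E :
      ((finrank k (LinearMap.range (Linear.rightComp k W T.mor₂)) : ℤ) =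
        (finrank k (W ⟶ T.obj₃) : ℤ) - (if Nonempty (W ≅ T.obj₃) then 1 else 0)) ∧
      ((finrank k (LinearMap.ker (Linear.rightComp k W T.invRotate.mor₁)) : ℤ) =
        (finrank k (W ⟶ (T.obj₃⟦(-1:ℤ)⟧)) : ℤ) -
          (if Nonempty (W ≅ T.obj₃) then 1 else 0)) ∧
      (finrank k (LinearMap.range (Linear.rightComp k W T.invRotate.mor₁)) +
        finrank k (LinearMap.ker (Linear.rightComp k W T.invRotate.mor₁)) =
        finrank k (W ⟶ (T.obj₃⟦(-1:ℤ)⟧))) ∧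
      (finrank k (LinearMap.range (Linear.rightComp k W T.mor₁)) +
        finrank k (LinearMap.range (Linear.rightComp k W T.invRotate.mor₁)) =
        finrank k (W ⟶ T.obj₁)) ∧
      (finrank k (LinearMap.range (Linear.rightComp k W T.mor₂)) +
        finrank k (LinearMap.range (Linear.rightComp k W T.mor₁)) =
        finrank k (W ⟶ T.obj₂)) ∧
      ((finrank k (W ⟶ T.obj₁) : ℤ) + (finrank k (W ⟶ T.obj₃) : ℤ) -
        (finrank k (W ⟶ T.obj₂) : ℤ) =
        (if Nonempty (W ≅ T.obj₃) then 2 else 0) →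
        (finrank k (W ⟶ T.obj₁) : ℤ) + finrank k (W ⟶ T.obj₃) -
          finrank k (W ⟶ T.obj₂) = if Nonempty (W ≅ T.obj₃) then 2 else 0) :=
    ⟨e1, e2, r0, r1, r2, fun h => h⟩
  obtain ⟨E1, E2, E0, ER1, ER2, EG⟩ := E
  apply EG
  by_cases hWZ : Nonempty (W ≅ T.obj₃)
  · rw [if_pos hWZ] at E1 E2 ⊢
    omega
  · rw [if_neg hWZ] at E1 E2 ⊢
    omega
end
end

section
/- Let c ∈ Q(t) and define g_n ∈ Q(t) by g_0 = c, g_1 = t^{-1}(1+t)(c − 1), and t·g_n = (1+t)·g_{n−1} − g_{n−2} for n ≥ 2. Then g_n = σ̄_n · (c − (1+t)(1−t^n)/(1−t^{n+1})) for all n ≥ 0, where σ̄_n = 1 + t^{-1} + ... + t^{-n}. -/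
open scoped Polynomial

noncomputable section

local notation "t" => (RatFunc.X : RatFunc ℚ)

/-- `σ̄_n = 1 + t⁻¹ + ... + t⁻ⁿ` in `ℚ(t)`. -/
def sigmaBar (n : ℕ) : RatFunc ℚ := ∑ i ∈ Finset.range (n + 1), t ^ (-(i : ℤ))

lemma tne : (t : RatFunc ℚ) ≠ 0 := RatFunc.X_ne_zero

lemma tm1 : (t - 1 : RatFunc ℚ) ≠ 0 := by
  have h : (t - 1 : RatFunc ℚ) = algebraMap (ℚ[X]) (RatFunc ℚ) (Polynomial.X - 1) := by
    simp [RatFunc.algebraMap_X]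
  rw [h]; apply RatFunc.algebraMap_ne_zero
  intro h0; have := congrArg (Polynomial.eval 0) h0; simp at this

lemma one_sub_pow_ne (k : ℕ) (hk : 1 ≤ k) : (1 - t ^ k : RatFunc ℚ) ≠ 0 := by
  have h : (1 - t ^ k : RatFunc ℚ) = algebraMap (ℚ[X]) (RatFunc ℚ) (1 - Polynomial.X ^ k) := by
    simp [RatFunc.algebraMap_X]
  rw [h]; apply RatFunc.algebraMap_ne_zero
  intro h0; have := congrArg (Polynomial.eval 0) h0
  simp [zero_pow (by omega : k ≠ 0)] at this

lemma sigmaBar_eq (n : ℕ) : sigmaBar n = (t ^ (n+1) - 1) / (t ^ n * (t - 1)) := by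
  induction n with
  | zero =>
    simp [sigmaBar]
    rw [div_self tm1]
  | succ n ih =>
    have hstep : sigmaBar (n+1) = sigmaBar n + (t ^ (n+1))⁻¹ := by
      rw [sigmaBar, sigmaBar, Finset.sum_range_succ, zpow_neg, zpow_natCast]
    rw [hstep, ih]
    have h1 := pow_ne_zero n tne
    have h2 := pow_ne_zero (n+1) tne
    rw [inv_eq_one_div, div_add_div _ _ (mul_ne_zero h1 tm1) h2,
      div_eq_div_iff (mul_ne_zero (mul_ne_zero h1 tm1) h2) (mul_ne_zero h2 tm1)]
    ring

lemma Fform (c : RatFunc ℚ) (k : ℕ) :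
    sigmaBar k * (c - (1 + t) * (1 - t ^ k) / (1 - t ^ (k + 1))) =
      ((1 + t) * (1 - t ^ k) - c * (1 - t ^ (k + 1))) / (t ^ k * (t - 1)) := by
  have hD := one_sub_pow_ne (k+1) (by omega)
  have hden : (t ^ k * (t - 1) : RatFunc ℚ) ≠ 0 := mul_ne_zero (pow_ne_zero k tne) tm1
  have e : c - (1 + t) * (1 - t ^ k) / (1 - t ^ (k + 1)) =
      (c * (1 - t ^ (k + 1)) - (1 + t) * (1 - t ^ k)) / (1 - t ^ (k + 1)) := by
    rw [eq_div_iff hD, sub_mul, div_mul_cancel₀ _ hD]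
  rw [sigmaBar_eq, e, div_mul_div_comm,
    div_eq_div_iff (mul_ne_zero hden hD) hden]
  ring

/-- the sequence `g` in `ℚ(t)` with `g₀ = c`,
`g₁ = t⁻¹(1+t)(c−1)` and `t·gₙ = (1+t)·gₙ₋₁ − gₙ₋₂` for `n ≥ 2` is given by
`gₙ = σ̄ₙ · (c − (1+t)(1−tⁿ)/(1−tⁿ⁺¹))`. -/
theorem stmt15 (c : RatFunc ℚ) (g : ℕ → RatFunc ℚ)
    (h0 : g 0 = c)
    (h1 : g 1 = t⁻¹ * (1 + t) * (c - 1))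
    (hrec : ∀ n : ℕ, 2 ≤ n → t * g n = (1 + t) * g (n - 1) - g (n - 2)) :
    ∀ n : ℕ, g n = sigmaBar n * (c - (1 + t) * (1 - t ^ n) / (1 - t ^ (n + 1))) := by
  intro n
  induction n using Nat.twoStepInduction with
  | zero =>
    simp [sigmaBar, h0]
  | one =>
    rw [h1, Fform]
    have e : t⁻¹ * (1 + t) * (c - 1) = ((1 + t) * (c - 1)) / t := by
      rw [inv_eq_one_div]; ring
    rw [e, div_eq_div_iff tne (mul_ne_zero (pow_ne_zero 1 tne) tm1)]
    ring
  | more n ih1 ih2 =>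
    have hr := hrec (n + 2) (by omega)
    simp only [Nat.add_sub_cancel, show n + 2 - 1 = n + 1 by omega] at hr
    have d0 : (t ^ n * (t - 1) : RatFunc ℚ) ≠ 0 := mul_ne_zero (pow_ne_zero n tne) tm1
    have d1 : (t ^ (n+1) * (t - 1) : RatFunc ℚ) ≠ 0 := mul_ne_zero (pow_ne_zero (n+1) tne) tm1
    have d2 : (t ^ (n+2) * (t - 1) : RatFunc ℚ) ≠ 0 := mul_ne_zero (pow_ne_zero (n+2) tne) tm1
    have hgoal : t * g (n + 2) =
        t * (sigmaBar (n+2) * (c - (1 + t) * (1 - t ^ (n+2)) / (1 - t ^ (n + 2 + 1)))) := by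
      rw [hr, ih1, ih2, Fform, Fform, Fform]
      rw [mul_div_assoc', mul_div_assoc', div_sub_div _ _ d1 d0,
        div_eq_div_iff (mul_ne_zero d1 d0) d2]
      ring
    exact mul_left_cancel₀ tne hgoal

end
end
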